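/- arXiv:1502.05454 — 2 statements merged into one kernel-verified Lean document; each statement's English description precedes it below -/
import Mathlib

section
/- Let H be a complex Hilbert space and let A and B be bounded self-adjoint operators on H. Then the Hausdorff distance between their spectra satisfies d_H(σ(A), σ(B)) ≤ ‖A − B‖. -/
open Metric in
lemma infDist_le_of_mem_spectrum_aux
    {H : Type*} [NormedAddCommGroup H] [InnerProductSpace ℂ H] [CompleteSpace H]
    (A B : H →L[ℂ] H) (hA : IsSelfAdjoint A) {z : ℂ} (hz : z ∈ spectrum ℂ B) :
    Metric.infDist z (spectrum ℂ A) ≤ ‖A - B‖ := by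
  by_contra hcon
  push_neg at hcon
  set d := Metric.infDist z (spectrum ℂ A) with hd_def
  have hd : 0 < d := (norm_nonneg _).trans_lt hcon
  have hns : IsStarNormal A := hA.isStarNormal
  have hzA : ∀ t ∈ spectrum ℂ A, d ≤ ‖t - z‖ := by
    intro t ht
    have := Metric.infDist_le_dist_of_mem (x := z) ht
    rwa [dist_eq_norm, norm_sub_rev] at this
  set f : ℂ → ℂ := fun t => (t - z)⁻¹ with hf_def
  have hf : ContinuousOn f (spectrum ℂ A) := by
    apply ContinuousOn.inv₀ (by fun_prop)
    intro t ht h0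
    have := hzA t ht
    rw [h0, norm_zero] at this
    exact hd.not_ge this
  set R := cfc f A with hR_def
  have hRnorm : ‖R‖ ≤ d⁻¹ := by
    apply norm_cfc_le (by positivity)
    intro t ht
    rw [hf_def, norm_inv]
    exact inv_anti₀ hd (hzA t ht)
  have hAz : A - algebraMap ℂ (H →L[ℂ] H) z = cfc (fun t : ℂ => t - z) A := by
    rw [cfc_sub (fun t : ℂ => t) (fun _ : ℂ => z) A, cfc_id' ℂ A, cfc_const z A]
  have hmul : (A - algebraMap ℂ (H →L[ℂ] H) z) * R = 1 := by
    rw [hAz, hR_def, ← cfc_mul _ _ A]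
    rw [show (fun t : ℂ => (t - z) * f t) = Set.indicator Set.univ (fun t : ℂ => (t - z) * f t) by simp]
    rw [Set.indicator_univ]
    calc cfc (fun t : ℂ => (t - z) * f t) A = cfc (1 : ℂ → ℂ) A := by
          apply cfc_congr
          intro t ht
          have h0 : t - z ≠ 0 := fun h0 => by
            have := hzA t ht; rw [h0, norm_zero] at this; exact hd.not_ge this
          simp [hf_def, mul_inv_cancel₀ h0]
      _ = 1 := cfc_one ℂ A
  have hmul' : R * (A - algebraMap ℂ (H →L[ℂ] H) z) = 1 := by
    rw [hAz, hR_def, ← cfc_mul _ _ A]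
    calc cfc (fun t : ℂ => f t * (t - z)) A = cfc (1 : ℂ → ℂ) A := by
          apply cfc_congr
          intro t ht
          have h0 : t - z ≠ 0 := fun h0 => by
            have := hzA t ht; rw [h0, norm_zero] at this; exact hd.not_ge this
          simp [hf_def, inv_mul_cancel₀ h0]
      _ = 1 := cfc_one ℂ A
  have hu : IsUnit (A - algebraMap ℂ (H →L[ℂ] H) z) :=
    ⟨⟨_, R, hmul, hmul'⟩, rfl⟩
  have hsmall : ‖R * (A - B)‖ < 1 := by
    calc ‖R * (A - B)‖ ≤ ‖R‖ * ‖A - B‖ := norm_mul_le _ _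
      _ ≤ d⁻¹ * ‖A - B‖ := by gcongr
      _ < d⁻¹ * d := by gcongr
      _ = 1 := inv_mul_cancel₀ hd.ne'
  have hunit1 : IsUnit (1 - R * (A - B)) := (Units.oneSub _ hsmall).isUnit
  have hfac : algebraMap ℂ (H →L[ℂ] H) z - B =
      -((A - algebraMap ℂ (H →L[ℂ] H) z) * (1 - R * (A - B))) := by
    have : (A - algebraMap ℂ (H →L[ℂ] H) z) * (R * (A - B)) = A - B := by
      rw [← mul_assoc, hmul, one_mul]
    rw [mul_sub, mul_one, this]
    abel
  have : IsUnit (algebraMap ℂ (H →L[ℂ] H) z - B) := hfac ▸ (hu.mul hunit1).neg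
  exact spectrum.mem_iff.mp hz this

/-- If `A` and `B` are bounded self-adjoint operators on a complex
Hilbert space, then the Hausdorff distance between their spectra is at most `‖A - B‖`. -/
theorem hausdorffDist_spectrum_le_of_selfAdjoint
    {H : Type*} [NormedAddCommGroup H] [InnerProductSpace ℂ H] [CompleteSpace H]
    (A B : H →L[ℂ] H) (hA : IsSelfAdjoint A) (hB : IsSelfAdjoint B) :
    Metric.hausdorffDist (spectrum ℂ A) (spectrum ℂ B) ≤ ‖A - B‖ := by
  have hnt : ∀ (C : H →L[ℂ] H) {x : ℂ}, x ∈ spectrum ℂ C → Nontrivial (H →L[ℂ] H) := by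
    intro C x hx
    rcases subsingleton_or_nontrivial (H →L[ℂ] H) with h | h
    · exact absurd (isUnit_of_subsingleton _) (spectrum.mem_iff.mp hx)
    · exact h
  apply Metric.hausdorffDist_le_of_mem_dist (norm_nonneg _)
  · intro x hx
    have := hnt A hx
    obtain ⟨y, hy, hdy⟩ := (spectrum.isCompact (𝕜 := ℂ) B).exists_infDist_eq_dist
      (spectrum.nonempty B) x
    refine ⟨y, hy, ?_⟩
    rw [← hdy]
    have := infDist_le_of_mem_spectrum_aux B A hB hx
    rwa [norm_sub_rev] at this
  · intro x hx
    have := hnt B hx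
    obtain ⟨y, hy, hdy⟩ := (spectrum.isCompact (𝕜 := ℂ) A).exists_infDist_eq_dist
      (spectrum.nonempty A) x
    refine ⟨y, hy, ?_⟩
    rw [← hdy]
    exact infDist_le_of_mem_spectrum_aux A B hA hx
end

section
/- Let T > 0, let V : ℝ → ℝ be T-periodic and locally square-integrable, let Q = ‖V‖_B, and suppose Δ_V, viewed as an entire function of z, satisfies the bound |Δ_V(μ²)| ≤ C₀ exp( C₀ Q^{1/2} + T |Im μ| ) for all μ ∈ ℂ and some constant C₀ ≥ 1 in the case T = π. Then there is a constant C > 0 depending only on C₀ such that, for T = π, |Δ_V′(z)| ≤ (C / (1 + |z|^{1/2})) · exp( C Q^{1/2} + π |Im √z| ) for all z ∈ ℂ, where √z denotes either square root of z and Δ_V′ is the derivative of the entire function z ↦ Δ_V(z). -/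
open MeasureTheory

/-- `y` is a solution of `-y'' + V y = z y` on `ℝ`, with derivative `yd`:
`y` is continuously differentiable and `yd x = yd 0 + ∫₀ˣ (V t - z) y t dt`. -/
def IsSolution (V : ℝ → ℝ) (z : ℂ) (y yd : ℝ → ℂ) : Prop :=
  (∀ x : ℝ, HasDerivAt y (yd x) x) ∧ Continuous yd ∧
    ∀ x : ℝ, yd x = yd 0 + ∫ t in (0:ℝ)..x, ((V t : ℂ) - z) * y t

/-- `Δ` is the discriminant of the `T`-periodic potential `V`:
`Δ z = y_N(z,T) + y_D'(z,T)` where `y_N`, `y_D` are the Neumann and Dirichlet solutions. -/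
def IsDiscriminant (T : ℝ) (V : ℝ → ℝ) (Δ : ℂ → ℂ) : Prop :=
  ∀ z : ℂ, ∃ yN yNd yD yDd : ℝ → ℂ,
    IsSolution V z yN yNd ∧ IsSolution V z yD yDd ∧
    yN 0 = 1 ∧ yNd 0 = 0 ∧ yD 0 = 0 ∧ yDd 0 = 1 ∧
    Δ z = yN T + yDd T

/-- The Besicovitch norm of a `T`-periodic potential: `((1/T) ∫₀ᵀ |W|²)^{1/2}`. -/

lemma cauchy1 {f : ℂ → ℂ} (hf : Differentiable ℂ f) {c : ℂ} {M : ℝ}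
    (h : ∀ w ∈ Metric.sphere c 1, ‖f w‖ ≤ M) : ‖deriv f c‖ ≤ M := by
  simpa using Complex.norm_deriv_le_of_forall_mem_sphere_norm_le one_pos hf.diffContOnCl h

lemma sq_cpow_half (z : ℂ) : (z ^ ((1:ℂ)/2)) ^ 2 = z := by
  have : ((1:ℂ)/2) = (((2:ℕ):ℂ))⁻¹ := by norm_num
  rw [this]
  exact Complex.cpow_nat_inv_pow z (by norm_num)

lemma norm_cpow_half (z : ℂ) : ‖z ^ ((1:ℂ)/2)‖ = Real.sqrt ‖z‖ := by
  rw [show ((1:ℂ)/2) = (((1/2:ℝ)):ℂ) by norm_num,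
    Complex.norm_cpow_real, Real.sqrt_eq_rpow]

noncomputable def besNorm (T : ℝ) (W : ℝ → ℝ) : ℝ :=
  Real.sqrt ((1 / T) * ∫ t in (0:ℝ)..T, (W t) ^ 2)

/-- (Case `T = π`.) Suppose the discriminant `Δ` of a `π`-periodic
locally square-integrable potential `V` with `Q = ‖V‖_B` satisfies
`|Δ(μ²)| ≤ C₀ exp(C₀ Q^{1/2} + π |Im μ|)` for all `μ ∈ ℂ`, where `C₀ ≥ 1`. Then there
is `C > 0` depending only on `C₀` such that
`|Δ'(z)| ≤ (C/(1 + |z|^{1/2})) exp(C Q^{1/2} + π |Im √z|)` for all `z ∈ ℂ`. -/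
theorem discriminant_deriv_bound_from_growth (C₀ : ℝ) (hC₀ : 1 ≤ C₀) :
    ∃ C : ℝ, 0 < C ∧
      ∀ (V : ℝ → ℝ) (Δ : ℂ → ℂ),
        Function.Periodic V Real.pi →
        LocallyIntegrable (fun t => (V t) ^ 2) volume →
        IsDiscriminant Real.pi V Δ → Differentiable ℂ Δ →
        (∀ μ : ℂ, ‖Δ (μ ^ 2)‖ ≤
          C₀ * Real.exp (C₀ * Real.sqrt (besNorm Real.pi V) + Real.pi * |μ.im|)) →
        ∀ z : ℂ, ‖deriv Δ z‖ ≤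
          C / (1 + Real.sqrt ‖z‖) *
            Real.exp (C * Real.sqrt (besNorm Real.pi V) +
              Real.pi * |(z ^ ((1:ℂ)/2)).im|) := by
  have hpi : (1:ℝ) ≤ Real.pi := by linarith [Real.pi_gt_three]
  have hE1 : (1:ℝ) ≤ Real.exp (2 * Real.pi) := by
    rw [show (1:ℝ) = Real.exp 0 by simp]
    exact Real.exp_le_exp.mpr (by positivity)
  refine ⟨4 * C₀ * Real.exp (2 * Real.pi), by positivity, ?_⟩
  intro V Δ _ _ _ hΔ hb z
  set C := 4 * C₀ * Real.exp (2 * Real.pi) with hCdef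
  have hC0 : 0 < C := by positivity
  have hCC₀ : C₀ ≤ C := by nlinarith
  set Q := Real.sqrt (besNorm Real.pi V) with hQdef
  have hQ0 : 0 ≤ Q := Real.sqrt_nonneg _
  set μ := z ^ ((1:ℂ)/2) with hμdef
  have hμsq : μ ^ 2 = z := sq_cpow_half z
  have hμnorm : ‖μ‖ = Real.sqrt ‖z‖ := norm_cpow_half z
  have hIm0 : (0:ℝ) ≤ Real.pi * |μ.im| := by positivity
  -- generic bound
  have hDb : ∀ w : ℂ, ‖Δ w‖ ≤ C₀ * Real.exp (C₀ * Q + Real.pi * Real.sqrt ‖w‖) := by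
    intro w
    have h1 := hb (w ^ ((1:ℂ)/2))
    rw [sq_cpow_half w] at h1
    refine h1.trans ?_
    have h2 : |(w ^ ((1:ℂ)/2)).im| ≤ Real.sqrt ‖w‖ := by
      rw [← norm_cpow_half w]
      exact Complex.abs_im_le_norm _
    gcongr <;> linarith
  rcases le_or_gt ‖z‖ 1 with hz | hz
  · -- small z : Cauchy on Δ directly
    have key : ‖deriv Δ z‖ ≤ C₀ * Real.exp (C₀ * Q + Real.pi * 2) := by
      apply cauchy1 hΔ
      intro w hw
      refine (hDb w).trans ?_
      have hwz : ‖w - z‖ = 1 := mem_sphere_iff_norm.mp hw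
      have hwle : ‖w‖ ≤ 2 := by
        calc ‖w‖ = ‖z + (w - z)‖ := by ring_nf
          _ ≤ ‖z‖ + ‖w - z‖ := norm_add_le _ _
          _ ≤ 2 := by rw [hwz]; linarith
      have : Real.sqrt ‖w‖ ≤ 2 := by
        have h4 : Real.sqrt ‖w‖ ≤ Real.sqrt 4 := Real.sqrt_le_sqrt (by linarith)
        have h5 : Real.sqrt 4 = 2 := by
          rw [show (4:ℝ) = 2 ^ 2 by norm_num, Real.sqrt_sq (by norm_num : (0:ℝ) ≤ 2)]
        linarith
      gcongr <;> linarith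
    refine key.trans ?_
    have hs : Real.sqrt ‖z‖ ≤ 1 := by
      calc Real.sqrt ‖z‖ ≤ Real.sqrt 1 := Real.sqrt_le_sqrt hz
        _ = 1 := Real.sqrt_one
    have hs0 : (0:ℝ) ≤ Real.sqrt ‖z‖ := Real.sqrt_nonneg _
    have hrhs : C / 2 * Real.exp (C₀ * Q) ≤
        C / (1 + Real.sqrt ‖z‖) * Real.exp (C * Q + Real.pi * |μ.im|) := by
      have e1 : C / 2 ≤ C / (1 + Real.sqrt ‖z‖) := by
        rw [div_le_div_iff₀ (by norm_num) (by linarith)]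
        nlinarith
      have e2 : Real.exp (C₀ * Q) ≤ Real.exp (C * Q + Real.pi * |μ.im|) :=
        Real.exp_le_exp.mpr (by nlinarith)
      exact mul_le_mul e1 e2 (Real.exp_pos _).le (by positivity)
    refine le_trans ?_ hrhs
    rw [Real.exp_add, hCdef]
    have : C₀ * (Real.exp (C₀ * Q) * Real.exp (Real.pi * 2)) ≤
        (4 * C₀ * Real.exp (2 * Real.pi)) / 2 * Real.exp (C₀ * Q) := by
      rw [show Real.pi * 2 = 2 * Real.pi by ring]
      have h3 : 0 < Real.exp (C₀ * Q) := Real.exp_pos _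
      have h4 : 0 < Real.exp (2 * Real.pi) := Real.exp_pos _
      nlinarith
    linarith [this]
  · -- large z : Cauchy on g ν = Δ (ν^2) at μ
    have hs1 : 1 ≤ Real.sqrt ‖z‖ := by
      rw [show (1:ℝ) = Real.sqrt 1 by simp]
      exact Real.sqrt_le_sqrt hz.le
    set s := Real.sqrt ‖z‖ with hsdef
    have hs0 : (0:ℝ) < s := by linarith
    set g : ℂ → ℂ := fun ν => Δ (ν ^ 2) with hgdef
    have hg : Differentiable ℂ g := hΔ.comp (differentiable_pow 2)
    have hderiv : deriv g μ = deriv Δ z * (2 * μ) := by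
      have h1 : HasDerivAt (fun ν : ℂ => ν ^ 2) (2 * μ) μ := by
        simpa using hasDerivAt_pow 2 μ
      have h2 : HasDerivAt Δ (deriv Δ (μ ^ 2)) (μ ^ 2) := (hΔ _).hasDerivAt
      have h3 := h2.comp μ h1
      rw [hμsq] at h3
      exact h3.deriv
    have hgb : ‖deriv g μ‖ ≤ C₀ * Real.exp (C₀ * Q + Real.pi * (|μ.im| + 1)) := by
      apply cauchy1 hg
      intro ν hν
      have h1 := hb ν
      have h2 : |ν.im| ≤ |μ.im| + 1 := by
        have hνμ : ‖ν - μ‖ = 1 := mem_sphere_iff_norm.mp hν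
        have : |(ν - μ).im| ≤ 1 := by
          rw [← hνμ]; exact Complex.abs_im_le_norm _
        calc |ν.im| = |μ.im + (ν - μ).im| := by
              congr 1; simp [Complex.sub_im]
          _ ≤ |μ.im| + |(ν - μ).im| := abs_add_le _ _
          _ ≤ |μ.im| + 1 := by linarith
      refine h1.trans ?_
      gcongr <;> linarith
    have hnorm : ‖deriv g μ‖ = ‖deriv Δ z‖ * (2 * s) := by
      rw [hderiv, norm_mul, norm_mul, hμnorm]
      norm_num
    have key : ‖deriv Δ z‖ ≤ C₀ * Real.exp (C₀ * Q + Real.pi * (|μ.im| + 1)) / (2 * s) := by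
      rw [le_div_iff₀ (by positivity), ← hnorm]; exact hgb
    refine key.trans ?_
    have hrhs : C / (2 * s) * Real.exp (C₀ * Q + Real.pi * |μ.im|) ≤
        C / (1 + s) * Real.exp (C * Q + Real.pi * |μ.im|) := by
      have e1 : C / (2 * s) ≤ C / (1 + s) := by
        rw [div_le_div_iff₀ (by linarith) (by linarith)]
        nlinarith
      have e2 : Real.exp (C₀ * Q + Real.pi * |μ.im|) ≤
          Real.exp (C * Q + Real.pi * |μ.im|) :=
        Real.exp_le_exp.mpr (by nlinarith)
      exact mul_le_mul e1 e2 (Real.exp_pos _).le (by positivity)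
    refine le_trans ?_ hrhs
    rw [div_mul_eq_mul_div, div_le_div_iff₀ (by positivity) (by positivity)]
    have hsplit : Real.exp (C₀ * Q + Real.pi * (|μ.im| + 1)) =
        Real.exp (C₀ * Q + Real.pi * |μ.im|) * Real.exp Real.pi := by
      rw [← Real.exp_add]; ring_nf
    rw [hsplit, hCdef]
    have h4 : Real.exp Real.pi ≤ Real.exp (2 * Real.pi) := by
      apply Real.exp_le_exp.mpr; linarith
    have h5 : 0 < Real.exp (C₀ * Q + Real.pi * |μ.im|) := Real.exp_pos _
    have h6 : 0 < Real.exp Real.pi := Real.exp_pos _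
    have h7 : C₀ * Real.exp Real.pi ≤ 4 * C₀ * Real.exp (2 * Real.pi) := by nlinarith
    calc C₀ * (Real.exp (C₀ * Q + Real.pi * |μ.im|) * Real.exp Real.pi) * (2 * s)
        = (C₀ * Real.exp Real.pi) * (Real.exp (C₀ * Q + Real.pi * |μ.im|) * (2 * s)) := by
          ring
      _ ≤ (4 * C₀ * Real.exp (2 * Real.pi)) *
            (Real.exp (C₀ * Q + Real.pi * |μ.im|) * (2 * s)) := by
          apply mul_le_mul_of_nonneg_right h7
          exact mul_nonneg h5.le (by linarith)
      _ = 4 * C₀ * Real.exp (2 * Real.pi) * Real.exp (C₀ * Q + Real.pi * |μ.im|) * (2 * s) := by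
          ring
end
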